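/- Let φ : M_n(F) → M_n(F) be a nonzero map satisfying φ(X ∘ Y) = φ(X) ∘ φ(Y) for all X, Y ∈ M_n(F) and φ(0) = 0. Then the restriction of φ to idempotents is orthoadditive: for all idempotents P, Q ∈ M_n(F) with PQ = QP = 0, one has φ(P + Q) = φ(P) + φ(Q). -/

import Mathlib

open Matrix

section StmtFourteen
variable {F : Type*} [Field F] {n : ℕ}

local notation "M" => Matrix (Fin n) (Fin n) F

private lemma smul_cancelTwo (h2 : (2:F) ≠ 0) {x y : M} (h : (2:F) • x = (2:F) • y) : x = y := by
  have := congrArg (fun z => (2:F)⁻¹ • z) h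
  simpa [smul_smul, inv_mul_cancel₀ h2] using this

private lemma unit_lemma (h2 : (2:F) ≠ 0) {m a : M} (hm : m * m = m)
    (h : m * a + a * m = (2:F) • a) : m * a = a ∧ a * m = a := by
  have hi : m*a + m*(a*m) = (2:F) • (m*a) := by
    calc m*a + m*(a*m) = m*(m*a + a*m) := by rw [mul_add, ← mul_assoc m m a, hm]
    _ = m * ((2:F) • a) := by rw [h]
    _ = (2:F) • (m*a) := by rw [mul_smul_comm]
  have hii : m*(a*m) + a*m = (2:F) • (a*m) := by
    calc m*(a*m) + a*m = (m*a + a*m)*m := by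
          rw [add_mul, mul_assoc m a m, mul_assoc a m m, hm]
    _ = ((2:F) • a) * m := by rw [h]
    _ = (2:F) • (a*m) := by rw [smul_mul_assoc]
  have h3 : m*a - a*m = (2:F) • (m*a - a*m) := by
    rw [smul_sub, ← hi, ← hii]; abel
  have h4 : m*a - a*m = 0 := by
    have h5 : m*a - a*m = (m*a - a*m) + (m*a - a*m) := by
      calc m*a - a*m = (2:F) • (m*a - a*m) := h3
      _ = (m*a - a*m) + (m*a - a*m) := two_smul F _
    exact (left_eq_add.mp h5)
  have hcomm : m * a = a * m := sub_eq_zero.mp h4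
  have h6 : (2:F) • (m*a) = (2:F) • a := by
    rw [two_smul]; nth_rewrite 2 [hcomm]; exact h
  have h7 : m * a = a := smul_cancelTwo h2 h6
  exact ⟨h7, hcomm ▸ h7⟩

private lemma orth_lemma (h2 : (2:F) ≠ 0) {a b : M} (ha : a * a = a) (hb : b * b = b)
    (h : a * b + b * a = 0) : a * b = 0 ∧ b * a = 0 := by
  have hi : a*b + a*(b*a) = 0 := by
    calc a*b + a*(b*a) = a*(a*b + b*a) := by rw [mul_add, ← mul_assoc a a b, ha]
    _ = 0 := by rw [h, mul_zero]
  have hii : a*(b*a) + b*a = 0 := by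
    calc a*(b*a) + b*a = (a*b + b*a)*a := by
          rw [add_mul, mul_assoc a b a, mul_assoc b a a, ha]
    _ = 0 := by rw [h, zero_mul]
  have hcomm : a*b = b*a := by
    have h8 := hi.trans hii.symm
    rw [add_comm (a*(b*a)) (b*a)] at h8
    exact add_right_cancel h8
  have h6 : (2:F) • (a*b) = (2:F) • (0:M) := by
    rw [smul_zero, two_smul]; nth_rewrite 2 [hcomm]; exact h
  have h7 : a*b = 0 := smul_cancelTwo h2 h6
  exact ⟨h7, hcomm ▸ h7⟩


private lemma smul_cancel' {c : F} (hc : c ≠ 0) {x y : M} (h : c • x = c • y) : x = y := by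
  have := congrArg (fun z => c⁻¹ • z) h
  simpa [smul_smul, inv_mul_cancel₀ hc] using this

private lemma core (h2 : (2:F) ≠ 0)
    (φ : M → M)
    (hφ : ∀ X Y : M, φ ((2 : F)⁻¹ • (X * Y + Y * X)) = (2 : F)⁻¹ • (φ X * φ Y + φ Y * φ X))
    (h0 : φ 0 = 0)
    (p q u v X Y : M)
    (hpp : p*p = p) (hqq : q*q = q) (hpq : p*q = 0) (hqp : q*p = 0)
    (hpu : p*u + u*p = u) (hqu : q*u + u*q = u)
    (hpv : p*v + v*p = v) (hqv : q*v + v*q = v)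
    (hX : u*v + v*u = (2:F) • X)
    (hXY : X*Y = p + q) (hYX : Y*X = p + q) :
    φ (p + q) = φ p + φ q := by
  have key : ∀ a b c : M, a*b + b*a = (2:F)•c →
      φ c = (2:F)⁻¹ • (φ a * φ b + φ b * φ a) := by
    intro a b c h
    have h' := hφ a b
    rwa [h, smul_smul, inv_mul_cancel₀ h2, one_smul] at h'
  have key2 : ∀ a b c : M, a*b + b*a = (2:F)•c →
      (2:F) • φ c = φ a * φ b + φ b * φ a := by
    intro a b c h
    rw [key a b c h, smul_smul, mul_inv_cancel₀ h2, one_smul]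
  -- idempotency of images
  have hee : φ p * φ p = φ p := by
    have h' := key2 p p p (by rw [hpp, two_smul])
    rw [← two_smul F (φ p * φ p)] at h'
    exact (smul_cancel' h2 h').symm
  have hff : φ q * φ q = φ q := by
    have h' := key2 q q q (by rw [hqq, two_smul])
    rw [← two_smul F (φ q * φ q)] at h'
    exact (smul_cancel' h2 h').symm
  have hpqpq : (p+q)*(p+q) = p + q := by
    rw [mul_add, add_mul, add_mul, hpp, hqq, hpq, hqp]; abel
  have hgg : φ (p+q) * φ (p+q) = φ (p+q) := by
    have h' := key2 (p+q) (p+q) (p+q) (by rw [hpqpq, two_smul])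
    rw [← two_smul F (φ (p+q) * φ (p+q))] at h'
    exact (smul_cancel' h2 h').symm
  -- orthogonality of e and f
  have hef : φ p * φ q + φ q * φ p = 0 := by
    have h' := key2 p q 0 (by rw [hpq, hqp, smul_zero, add_zero])
    rw [h0, smul_zero] at h'
    exact h'.symm
  obtain ⟨hef0, hfe0⟩ := orth_lemma h2 hee hff hef
  -- g absorbs e and f
  have hgesum : (p+q)*p + p*(p+q) = (2:F) • p := by
    rw [add_mul, mul_add, hpp, hqp, hpq, two_smul]; abel
  obtain ⟨hge, heg⟩ := unit_lemma h2 hgg (key2 (p+q) p p hgesum).symm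
  have hgfsum : (p+q)*q + q*(p+q) = (2:F) • q := by
    rw [add_mul, mul_add, hqq, hpq, hqp, two_smul]; abel
  obtain ⟨hgf, hfg⟩ := unit_lemma h2 hgg (key2 (p+q) q q hgfsum).symm
  -- the defect idempotent s
  have hse : (φ (p+q) - φ p - φ q) * φ p = 0 := by
    rw [sub_mul, sub_mul, hge, hee, hfe0]; abel
  have hes : φ p * (φ (p+q) - φ p - φ q) = 0 := by
    rw [mul_sub, mul_sub, heg, hee, hef0]; abel
  have hsf : (φ (p+q) - φ p - φ q) * φ q = 0 := by
    rw [sub_mul, sub_mul, hgf, hff, hef0]; abel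
  have hfs : φ q * (φ (p+q) - φ p - φ q) = 0 := by
    rw [mul_sub, mul_sub, hfg, hff, hfe0]; abel
  have hsg : (φ (p+q) - φ p - φ q) * φ (p+q) = (φ (p+q) - φ p - φ q) := by
    rw [sub_mul, sub_mul, hgg, heg, hfg]
  have hss : (φ (p+q) - φ p - φ q) * (φ (p+q) - φ p - φ q) = (φ (p+q) - φ p - φ q) := by
    rw [mul_sub, mul_sub, hsg, hse, hsf]; abel
  -- universal absorbed forms
  have Mee : ∀ A : M, φ p * (φ p * A) = φ p * A := by
    intro A; rw [← mul_assoc, hee]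
  have Mff : ∀ A : M, φ q * (φ q * A) = φ q * A := by
    intro A; rw [← mul_assoc, hff]
  have Zef : ∀ A : M, φ p * (φ q * A) = 0 := by
    intro A; rw [← mul_assoc, hef0, zero_mul]
  have Zfe : ∀ A : M, φ q * (φ p * A) = 0 := by
    intro A; rw [← mul_assoc, hfe0, zero_mul]
  have Zse : ∀ A : M, (φ (p+q) - φ p - φ q) * (φ p * A) = 0 := by
    intro A; rw [← mul_assoc, hse, zero_mul]
  have Zsf : ∀ A : M, (φ (p+q) - φ p - φ q) * (φ q * A) = 0 := by
    intro A; rw [← mul_assoc, hsf, zero_mul]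
  -- mixed elements are annihilated by s
  have mixedNull : ∀ w : M, (p*w + w*p = w) → (q*w + w*q = w) →
      (φ (p+q) - φ p - φ q) * φ w = 0 ∧ φ w * (φ (p+q) - φ p - φ q) = 0 := by
    intro w hw1 hw2
    have hgw : (p+q)*w + w*(p+q) = (2:F) • w := by
      rw [add_mul, mul_add, two_smul]
      calc p*w + q*w + (w*p + w*q) = (p*w + w*p) + (q*w + w*q) := by abel
      _ = w + w := by rw [hw1, hw2]
    obtain ⟨hgW, hWg⟩ := unit_lemma h2 hgg (key2 (p+q) w w hgw).symm
    have k1 := key p w ((2:F)⁻¹ • w) (by rw [smul_smul, mul_inv_cancel₀ h2, one_smul]; exact hw1)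
    have k2 := key q w ((2:F)⁻¹ • w) (by rw [smul_smul, mul_inv_cancel₀ h2, one_smul]; exact hw2)
    have R1 : φ p * φ w + φ w * φ p = φ q * φ w + φ w * φ q :=
      smul_cancel' (inv_ne_zero h2) (k1.symm.trans k2)
    have k3 := key p ((2:F)•w) w (by
      rw [mul_smul_comm, smul_mul_assoc, ← smul_add, hw1])
    have hsWs : (φ (p+q) - φ p - φ q) * (φ w * (φ (p+q) - φ p - φ q)) = 0 := by
      rw [k3]
      simp only [smul_mul_assoc, mul_smul_comm, mul_add, add_mul, mul_assoc]
      rw [Zse, hes]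
      simp
    have hsWe : (φ (p+q) - φ p - φ q) * (φ w * φ p) = 0 := by
      have hc := congrArg (fun z => (φ (p+q) - φ p - φ q) * (z * φ p)) R1
      simp only [mul_add, add_mul, mul_assoc] at hc
      rw [Zse, Zsf, hee, hfe0, mul_zero, mul_zero] at hc
      simpa using hc
    have hsWf : (φ (p+q) - φ p - φ q) * (φ w * φ q) = 0 := by
      have hc := congrArg (fun z => (φ (p+q) - φ p - φ q) * (z * φ q)) R1
      simp only [mul_add, add_mul, mul_assoc] at hc
      rw [Zse, Zsf, hef0, hff, mul_zero, mul_zero] at hc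
      simpa using hc.symm
    have heWs : φ p * (φ w * (φ (p+q) - φ p - φ q)) = 0 := by
      have hc := congrArg (fun z => φ p * (z * (φ (p+q) - φ p - φ q))) R1
      simp only [mul_add, add_mul, mul_assoc] at hc
      rw [Mee, Zef, hes, hfs, mul_zero, mul_zero] at hc
      simpa using hc
    have hfWs : φ q * (φ w * (φ (p+q) - φ p - φ q)) = 0 := by
      have hc := congrArg (fun z => φ q * (z * (φ (p+q) - φ p - φ q))) R1
      simp only [mul_add, add_mul, mul_assoc] at hc
      rw [Zfe, Mff, hes, hfs, mul_zero, mul_zero] at hc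
      simpa using hc.symm
    constructor
    · have hWdec : φ w * φ (p+q) = φ w * φ p + φ w * φ q +
          φ w * (φ (p+q) - φ p - φ q) := by
        rw [mul_sub, mul_sub]; abel
      calc (φ (p+q) - φ p - φ q) * φ w
          = (φ (p+q) - φ p - φ q) * (φ w * φ (p+q)) := by rw [hWg]
        _ = 0 := by rw [hWdec, mul_add, mul_add, hsWe, hsWf, hsWs]; simp
    · have hWdec : φ (p+q) * (φ w * (φ (p+q) - φ p - φ q))
          = φ p * (φ w * (φ (p+q) - φ p - φ q)) + φ q * (φ w * (φ (p+q) - φ p - φ q))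
            + (φ (p+q) - φ p - φ q) * (φ w * (φ (p+q) - φ p - φ q)) := by
        rw [sub_mul, sub_mul]; abel
      calc φ w * (φ (p+q) - φ p - φ q)
          = φ (p+q) * (φ w * (φ (p+q) - φ p - φ q)) := by rw [← mul_assoc, hgW]
        _ = 0 := by rw [hWdec, heWs, hfWs, hsWs]; simp
  obtain ⟨hsU, hUs⟩ := mixedNull u hpu hqu
  obtain ⟨hsV, hVs⟩ := mixedNull v hpv hqv
  have hkX := key u v X hX
  have hsφX : (φ (p+q) - φ p - φ q) * φ X = 0 := by
    rw [hkX]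
    rw [mul_smul_comm, mul_add, ← mul_assoc, ← mul_assoc, hsU, hsV]
    simp
  have hφXs : φ X * (φ (p+q) - φ p - φ q) = 0 := by
    rw [hkX]
    rw [smul_mul_assoc, add_mul, mul_assoc, mul_assoc, hVs, hUs]
    simp
  have hfin := key X Y (p+q) (by rw [hXY, hYX, two_smul])
  have mid : ∀ Z : M, Z = (2:F)⁻¹ • (φ X * φ Y + φ Y * φ X) →
      (φ (p+q) - φ p - φ q) * Z * (φ (p+q) - φ p - φ q) = 0 := by
    intro Z hZ
    subst hZ
    rw [mul_smul_comm, smul_mul_assoc, mul_add, add_mul]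
    rw [← mul_assoc (φ (p+q) - φ p - φ q) (φ X) (φ Y), hsφX]
    rw [← mul_assoc (φ (p+q) - φ p - φ q) (φ Y) (φ X)]
    rw [mul_assoc ((φ (p+q) - φ p - φ q) * φ Y) (φ X) (φ (p+q) - φ p - φ q), hφXs]
    simp
  have hstep : (φ (p+q) - φ p - φ q)
      = (φ (p+q) - φ p - φ q) * φ (p+q) * (φ (p+q) - φ p - φ q) := by
    rw [hsg, hss]
  have hzero : (φ (p+q) - φ p - φ q) = 0 := hstep.trans (mid (φ (p+q)) hfin)
  rw [sub_sub, sub_eq_zero] at hzero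
  exact hzero


private lemma direct (h2 : (2:F) ≠ 0)
    (φ : M → M)
    (hφ : ∀ X Y : M, φ ((2 : F)⁻¹ • (X * Y + Y * X)) = (2 : F)⁻¹ • (φ X * φ Y + φ Y * φ X))
    (h0 : φ 0 = 0)
    (t k : ℕ) (hk : k ≤ t)
    (p q : M)
    (Ap : Matrix (Fin n) (Fin t ⊕ Fin k) F) (Bp : Matrix (Fin t ⊕ Fin k) (Fin n) F)
    (Aq : Matrix (Fin n) (Fin t) F) (Bq : Matrix (Fin t) (Fin n) F)
    (hABp : Ap * Bp = p) (hBAp : Bp * Ap = 1)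
    (hABq : Aq * Bq = q) (hBAq : Bq * Aq = 1)
    (hBpAq : Bp * Aq = 0) (hBqAp : Bq * Ap = 0) :
    φ (p + q) = φ p + φ q := by
  classical
  set c : Fin k → Fin t := Fin.castLE hk with hc
  set Ebar : Matrix (Fin t) (Fin k) F := Matrix.of (fun i j => if i = c j then (1:F) else 0)
    with hEbar
  set Etil : Matrix (Fin k) (Fin t) F := Matrix.of (fun i j => if c i = j then (1:F) else 0)
    with hEtil
  have hEE : Etil * Ebar = 1 := by
    ext i j
    rw [Matrix.mul_apply]
    simp only [hEtil, hEbar, Matrix.of_apply, ite_mul, one_mul, zero_mul]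
    rw [Finset.sum_ite_eq]
    simp only [Finset.mem_univ, if_true, Matrix.one_apply]
    by_cases h : i = j
    · subst h; simp
    · have hcc : ¬ (c i = c j) := fun hcc => h (by rwa [hc, Fin.castLE_inj] at hcc)
      rw [if_neg hcc, if_neg h]
  set P : Matrix (Fin t ⊕ Fin k) (Fin t ⊕ Fin k) F := fromBlocks 1 Ebar Etil 0 with hP
  set Pinv : Matrix (Fin t ⊕ Fin k) (Fin t ⊕ Fin k) F :=
    fromBlocks (1 - Ebar * Etil) Ebar Etil (-1) with hPinv
  have hPPinv : P * Pinv = 1 := by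
    rw [hP, hPinv, Matrix.fromBlocks_multiply]
    have b11 : (1:Matrix (Fin t) (Fin t) F) * (1 - Ebar*Etil) + Ebar*Etil = 1 := by
      rw [Matrix.one_mul, sub_add_cancel]
    have b12 : (1:Matrix (Fin t) (Fin t) F) * Ebar
        + Ebar * (-1 : Matrix (Fin k) (Fin k) F) = 0 := by
      rw [Matrix.one_mul, Matrix.mul_neg, Matrix.mul_one, add_neg_cancel]
    have b21 : Etil * (1 - Ebar*Etil) + (0 : Matrix (Fin k) (Fin k) F) * Etil = 0 := by
      rw [Matrix.mul_sub, Matrix.mul_one, ← Matrix.mul_assoc, hEE, Matrix.one_mul,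
        sub_self, Matrix.zero_mul, add_zero]
    have b22 : Etil * Ebar + (0 : Matrix (Fin k) (Fin k) F) * (-1 : Matrix (Fin k) (Fin k) F)
        = 1 := by
      rw [hEE, Matrix.zero_mul, add_zero]
    rw [b11, b12, b21, b22, Matrix.fromBlocks_one]
  have hPinvP : Pinv * P = 1 := by
    rw [hP, hPinv, Matrix.fromBlocks_multiply]
    have b11 : (1 - Ebar*Etil) * (1 : Matrix (Fin t) (Fin t) F) + Ebar*Etil = 1 := by
      rw [Matrix.mul_one, sub_add_cancel]
    have b12 : (1 - Ebar*Etil) * Ebar + Ebar * (0 : Matrix (Fin k) (Fin k) F) = 0 := by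
      rw [Matrix.sub_mul, Matrix.one_mul, Matrix.mul_assoc, hEE, Matrix.mul_one,
        sub_self, Matrix.mul_zero, add_zero]
    have b21 : Etil * (1 : Matrix (Fin t) (Fin t) F) + (-1 : Matrix (Fin k) (Fin k) F) * Etil = 0 := by
      rw [Matrix.mul_one, Matrix.neg_mul, Matrix.one_mul, add_neg_cancel]
    have b22 : Etil * Ebar + (-1 : Matrix (Fin k) (Fin k) F) * (0 : Matrix (Fin k) (Fin k) F)
        = 1 := by
      rw [hEE, Matrix.mul_zero, add_zero]
    rw [b11, b12, b21, b22, Matrix.fromBlocks_one]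
  set ahat : Matrix (Fin t ⊕ Fin k) (Fin t) F := Matrix.fromRows 1 0 with hahat
  set bhat : Matrix (Fin t) (Fin t ⊕ Fin k) F := Matrix.fromCols 1 0 with hbhat
  set chat : Matrix (Fin t ⊕ Fin k) (Fin t) F := Matrix.fromRows 0 ((2:F) • Etil) with hchat
  set dhat : Matrix (Fin t) (Fin t ⊕ Fin k) F :=
    Matrix.fromCols ((2:F) • 1) ((2:F) • Ebar) with hdhat
  have had : ahat * dhat + chat * bhat = (2:F) • P := by
    rw [hahat, hdhat, hchat, hbhat, hP, Matrix.fromRows_mul_fromCols,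
      Matrix.fromRows_mul_fromCols, Matrix.fromBlocks_add, Matrix.fromBlocks_smul]
    congr 1 <;> simp
  have hbc : bhat * chat + dhat * ahat = (2:F) • (1 : Matrix (Fin t) (Fin t) F) := by
    rw [hbhat, hchat, hdhat, hahat, Matrix.fromCols_mul_fromRows,
      Matrix.fromCols_mul_fromRows]
    simp
  -- the witnesses
  set u : M := Ap * (ahat * Bq) + Aq * (bhat * Bp) with hu
  set v : M := Ap * (chat * Bq) + Aq * (dhat * Bp) with hv
  set X : M := Ap * (P * Bp) + Aq * Bq with hXdef
  set Y : M := Ap * (Pinv * Bp) + Aq * Bq with hYdef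
  -- absorption lemmas
  have l1 : ∀ (W : Matrix (Fin t ⊕ Fin k) (Fin n) F), Bp * (Ap * W) = W := by
    intro W; rw [← Matrix.mul_assoc, hBAp, Matrix.one_mul]
  have l2 : ∀ (W : Matrix (Fin t) (Fin n) F), Bq * (Aq * W) = W := by
    intro W; rw [← Matrix.mul_assoc, hBAq, Matrix.one_mul]
  have l3 : ∀ (W : Matrix (Fin t) (Fin n) F), Bp * (Aq * W) = 0 := by
    intro W; rw [← Matrix.mul_assoc, hBpAq, Matrix.zero_mul]
  have l4 : ∀ (W : Matrix (Fin t ⊕ Fin k) (Fin n) F), Bq * (Ap * W) = 0 := by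
    intro W; rw [← Matrix.mul_assoc, hBqAp, Matrix.zero_mul]
  have hpp : p * p = p := by
    rw [← hABp, Matrix.mul_assoc, l1]
  have hqq : q * q = q := by
    rw [← hABq, Matrix.mul_assoc, l2]
  have hpq : p * q = 0 := by
    rw [← hABp, ← hABq, Matrix.mul_assoc, l3, Matrix.mul_zero]
  have hqp : q * p = 0 := by
    rw [← hABp, ← hABq, Matrix.mul_assoc, l4, Matrix.mul_zero]
  have hpu : p*u + u*p = u := by
    rw [hu, ← hABp]
    simp only [mul_add, add_mul, Matrix.mul_add, Matrix.add_mul, Matrix.mul_assoc, l1, l2, l3,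
      l4, Matrix.mul_zero, Matrix.zero_mul, mul_zero, zero_mul, add_zero, zero_add]
    all_goals abel
  have hqu : q*u + u*q = u := by
    rw [hu, ← hABq]
    simp only [mul_add, add_mul, Matrix.mul_add, Matrix.add_mul, Matrix.mul_assoc, l1, l2, l3,
      l4, Matrix.mul_zero, Matrix.zero_mul, mul_zero, zero_mul, add_zero, zero_add]
    all_goals abel
  have hpv : p*v + v*p = v := by
    rw [hv, ← hABp]
    simp only [mul_add, add_mul, Matrix.mul_add, Matrix.add_mul, Matrix.mul_assoc, l1, l2, l3,
      l4, Matrix.mul_zero, Matrix.zero_mul, mul_zero, zero_mul, add_zero, zero_add]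
    all_goals abel
  have hqv : q*v + v*q = v := by
    rw [hv, ← hABq]
    simp only [mul_add, add_mul, Matrix.mul_add, Matrix.add_mul, Matrix.mul_assoc, l1, l2, l3,
      l4, Matrix.mul_zero, Matrix.zero_mul, mul_zero, zero_mul, add_zero, zero_add]
    all_goals abel
  have e1 : Ap * (ahat * (dhat * Bp)) + Ap * (chat * (bhat * Bp))
      = (2:F) • (Ap * (P * Bp)) := by
    have h' := congrArg (fun Z => Ap * (Z * Bp)) had
    simpa only [Matrix.add_mul, Matrix.mul_add, Matrix.mul_assoc, Matrix.smul_mul,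
      Matrix.mul_smul] using h'
  have e2 : Aq * (bhat * (chat * Bq)) + Aq * (dhat * (ahat * Bq))
      = (2:F) • (Aq * Bq) := by
    have h' := congrArg (fun Z => Aq * (Z * Bq)) hbc
    simpa only [Matrix.add_mul, Matrix.mul_add, Matrix.mul_assoc, Matrix.smul_mul,
      Matrix.mul_smul, Matrix.one_mul] using h'
  have hXeq : u*v + v*u = (2:F) • X := by
    rw [hu, hv, hXdef]
    simp only [mul_add, add_mul, Matrix.mul_add, Matrix.add_mul, Matrix.mul_assoc, l1, l2, l3,
      l4, Matrix.mul_zero, Matrix.zero_mul, mul_zero, zero_mul, add_zero, zero_add, smul_add]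
    rw [← e1, ← e2]
    abel
  have hXY : X*Y = p + q := by
    rw [hXdef, hYdef, ← hABp, ← hABq]
    simp only [mul_add, add_mul, Matrix.mul_add, Matrix.add_mul, Matrix.mul_assoc, l1, l2, l3,
      l4, Matrix.mul_zero, Matrix.zero_mul, mul_zero, zero_mul, add_zero, zero_add]
    rw [← Matrix.mul_assoc P Pinv Bp, hPPinv, Matrix.one_mul]
    all_goals abel
  have hYX : Y*X = p + q := by
    rw [hXdef, hYdef, ← hABp, ← hABq]
    simp only [mul_add, add_mul, Matrix.mul_add, Matrix.add_mul, Matrix.mul_assoc, l1, l2, l3,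
      l4, Matrix.mul_zero, Matrix.zero_mul, mul_zero, zero_mul, add_zero, zero_add]
    rw [← Matrix.mul_assoc Pinv P Bp, hPinvP, Matrix.one_mul]
    all_goals abel
  exact core h2 φ hφ h0 p q u v X Y hpp hqq hpq hqp hpu hqu hpv hqv hXeq hXY hYX


set_option synthInstance.maxHeartbeats 1000000 in
private lemma rankFact (p : Matrix (Fin n) (Fin n) F) (hp : p * p = p) :
    ∃ (r : ℕ) (A : Matrix (Fin n) (Fin r) F) (B : Matrix (Fin r) (Fin n) F),
      A * B = p ∧ B * A = 1 := by
  classical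
  set T : (Fin n → F) →ₗ[F] (Fin n → F) := Matrix.mulVecLin p with hT
  set W : Submodule F (Fin n → F) := LinearMap.range T with hW
  set r : ℕ := Module.finrank F W with hr
  let b : Module.Basis (Fin r) F W := Module.finBasis F W
  have hfix : ∀ w : W, p.mulVec (w : Fin n → F) = (w : Fin n → F) := by
    rintro ⟨w, hw⟩
    obtain ⟨x, hx⟩ := hw
    have : T (T x) = T x := by
      rw [hT]
      simp only [Matrix.mulVecLin_apply]
      rw [Matrix.mulVec_mulVec, hp]
    subst hx
    exact this
  set wv : Fin n → W := fun j => ⟨p.mulVec (Pi.single j 1), ⟨Pi.single j 1, rfl⟩⟩ with hwv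
  set A : Matrix (Fin n) (Fin r) F := Matrix.of (fun i j => (b j : Fin n → F) i) with hA
  set B : Matrix (Fin r) (Fin n) F := Matrix.of (fun i j => b.repr (wv j) i) with hB
  have hmulvec_single : ∀ (j : Fin n) (i : Fin n), p.mulVec (Pi.single j 1) i = p i j := by
    intro j i
    simp [Matrix.mulVec, dotProduct, Pi.single_apply]
  refine ⟨r, A, B, ?_, ?_⟩
  · ext i j
    rw [Matrix.mul_apply]
    have h1 : (((∑ k : Fin r, b.repr (wv j) k • b k : W) : Fin n → F)) i
        = ((wv j : W) : Fin n → F) i := by rw [Module.Basis.sum_repr]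
    have h2 : (((∑ k : Fin r, b.repr (wv j) k • b k : W) : Fin n → F)) i
        = ∑ k : Fin r, b.repr (wv j) k * (b k : Fin n → F) i := by
      rw [Submodule.coe_sum, Finset.sum_apply]
      apply Finset.sum_congr rfl
      intro k _
      simp
    have h3 : ((wv j : W) : Fin n → F) i = p i j := by
      rw [hwv]; exact hmulvec_single j i
    rw [← h3, ← h1, h2]
    apply Finset.sum_congr rfl
    intro k _
    rw [hA, hB]
    simp [mul_comm]
  · ext i j
    rw [Matrix.mul_apply]
    have key1 : (∑ k : Fin n, ((b j : Fin n → F) k) • wv k) = b j := by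
      apply Subtype.ext
      rw [Submodule.coe_sum]
      ext m
      rw [Finset.sum_apply]
      have hterm : ∀ k : Fin n, ((((b j : Fin n → F) k • wv k : W)) : Fin n → F) m
          = p m k * ((b j : Fin n → F) k) := by
        intro k
        simp [hwv, hmulvec_single, mul_comm]
      rw [Finset.sum_congr rfl (fun k _ => hterm k)]
      have hfj := congrFun (hfix (b j)) m
      rw [← hfj]
      simp [Matrix.mulVec, dotProduct]
    have key2 : (∑ k : Fin n, ((b j : Fin n → F) k) • b.repr (wv k)) = b.repr (b j) := by
      have h' := congrArg (fun w => b.repr w) key1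
      simp only [_root_.map_sum, _root_.map_smul] at h'
      exact h'
    have key3 := DFunLike.congr_fun key2 i
    simp only [Finsupp.finset_sum_apply, Finsupp.smul_apply, Module.Basis.repr_self,
      Finsupp.single_apply, smul_eq_mul] at key3
    rw [hB, hA]
    simp only [Matrix.of_apply]
    have lhs_eq : ∑ k : Fin n, b.repr (wv k) i * (b j : Fin n → F) k
        = ∑ k : Fin n, ((b j : Fin n → F) k) * b.repr (wv k) i := by
      apply Finset.sum_congr rfl
      intro k _
      rw [mul_comm]
    rw [lhs_eq, key3, Matrix.one_apply]
    by_cases h : i = j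
    · subst h; simp
    · rw [if_neg h, if_neg (Ne.symm h)]


private lemma submatrix_one_inl_inl {a b : ℕ} :
    (1 : Matrix (Fin a ⊕ Fin b) (Fin a ⊕ Fin b) F).submatrix Sum.inl Sum.inl = 1 := by
  ext i j
  simp [Matrix.submatrix_apply, Matrix.one_apply, Sum.inl.injEq]

private lemma submatrix_one_inr_inr {a b : ℕ} :
    (1 : Matrix (Fin a ⊕ Fin b) (Fin a ⊕ Fin b) F).submatrix Sum.inr Sum.inr = 1 := by
  ext i j
  simp [Matrix.submatrix_apply, Matrix.one_apply, Sum.inr.injEq]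

private lemma submatrix_one_inl_inr {a b : ℕ} :
    (1 : Matrix (Fin a ⊕ Fin b) (Fin a ⊕ Fin b) F).submatrix Sum.inl Sum.inr = 0 := by
  ext i j
  simp [Matrix.submatrix_apply, Matrix.one_apply]

private lemma submatrix_one_inr_inl {a b : ℕ} :
    (1 : Matrix (Fin a ⊕ Fin b) (Fin a ⊕ Fin b) F).submatrix Sum.inr Sum.inl = 0 := by
  ext i j
  simp [Matrix.submatrix_apply, Matrix.one_apply]

private lemma main (h2 : (2:F) ≠ 0)
    (φ : M → M)
    (hφ : ∀ X Y : M, φ ((2 : F)⁻¹ • (X * Y + Y * X)) = (2 : F)⁻¹ • (φ X * φ Y + φ Y * φ X))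
    (h0 : φ 0 = 0) :
    ∀ (N r t : ℕ), t ≤ r → r ≤ N →
    ∀ (p q : M) (Ap : Matrix (Fin n) (Fin r) F) (Bp : Matrix (Fin r) (Fin n) F)
      (Aq : Matrix (Fin n) (Fin t) F) (Bq : Matrix (Fin t) (Fin n) F),
      Ap * Bp = p → Bp * Ap = 1 → Aq * Bq = q → Bq * Aq = 1 →
      Bp * Aq = 0 → Bq * Ap = 0 →
      φ (p + q) = φ p + φ q := by
  intro N
  induction N with
  | zero =>
    intro r t htr hrN p q Ap Bp Aq Bq hABp hBAp hABq hBAq hO1 hO2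
    have hr0 : r = 0 := Nat.le_zero.mp hrN
    have ht0 : t = 0 := Nat.le_zero.mp (hr0 ▸ htr)
    subst hr0; subst ht0
    have hp0 : p = 0 := by
      rw [← hABp]; ext i j; rw [Matrix.mul_apply]; simp
    have hq0 : q = 0 := by
      rw [← hABq]; ext i j; rw [Matrix.mul_apply]; simp
    rw [hp0, hq0, add_zero, h0, add_zero]
  | succ N ih =>
    intro r t htr hrN p q Ap Bp Aq Bq hABp hBAp hABq hBAq hO1 hO2
    by_cases ht : t = 0
    · subst ht
      have hq0 : q = 0 := by
        rw [← hABq]; ext i j; rw [Matrix.mul_apply]; simp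
      rw [hq0, add_zero, h0, add_zero]
    · have ht1 : 1 ≤ t := Nat.one_le_iff_ne_zero.mpr ht
      by_cases hr2t : r ≤ 2*t
      · -- direct case
        set k := r - t with hkdef
        have hk : k ≤ t := by omega
        have hrtk : r = t + k := by omega
        set e : Fin r ≃ (Fin t ⊕ Fin k) := (finCongr hrtk).trans finSumFinEquiv.symm with he
        set A' := Ap.submatrix id ⇑e.symm with hA'
        set B' := Bp.submatrix ⇑e.symm id with hB'
        have hA'B' : A' * B' = p := by
          rw [hA', hB', Matrix.submatrix_mul_equiv Ap Bp id e.symm id,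
            Matrix.submatrix_id_id, hABp]
        have hB'A' : B' * A' = 1 := by
          rw [hA', hB']
          have := Matrix.submatrix_mul_equiv Bp Ap (⇑e.symm) (Equiv.refl (Fin n)) (⇑e.symm)
          rw [Equiv.coe_refl] at this
          rw [this, hBAp, Matrix.submatrix_one_equiv]
        have hB'Aq : B' * Aq = 0 := by
          rw [hB']
          have := Matrix.submatrix_mul_equiv Bp Aq (⇑e.symm) (Equiv.refl (Fin n)) id
          rw [Equiv.coe_refl] at this
          have h' : Aq.submatrix id id = Aq := Matrix.submatrix_id_id Aq
          rw [h'] at this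
          rw [this, hO1]
          ext i j; simp [Matrix.submatrix_apply]
        have hBqA' : Bq * A' = 0 := by
          rw [hA']
          have := Matrix.submatrix_mul_equiv Bq Ap id (Equiv.refl (Fin n)) (⇑e.symm)
          rw [Equiv.coe_refl] at this
          have h' : Bq.submatrix id id = Bq := Matrix.submatrix_id_id Bq
          rw [h'] at this
          rw [this, hO2]
          ext i j; simp [Matrix.submatrix_apply]
        exact direct h2 φ hφ h0 t k hk p q A' B' Aq Bq hA'B' hB'A' hABq hBAq hB'Aq hBqA'
      · -- splitting case
        push_neg at hr2t
        set m := r - t with hmdef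
        have hrm : r = m + t := by omega
        set e : Fin r ≃ (Fin m ⊕ Fin t) := (finCongr hrm).trans finSumFinEquiv.symm with he
        set A' := Ap.submatrix id ⇑e.symm with hA'
        set B' := Bp.submatrix ⇑e.symm id with hB'
        have hA'B' : A' * B' = p := by
          rw [hA', hB', Matrix.submatrix_mul_equiv Ap Bp id e.symm id,
            Matrix.submatrix_id_id, hABp]
        have hB'A' : B' * A' = 1 := by
          rw [hA', hB']
          have := Matrix.submatrix_mul_equiv Bp Ap (⇑e.symm) (Equiv.refl (Fin n)) (⇑e.symm)
          rw [Equiv.coe_refl] at this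
          rw [this, hBAp, Matrix.submatrix_one_equiv]
        have hB'Aq : B' * Aq = 0 := by
          rw [hB']
          have := Matrix.submatrix_mul_equiv Bp Aq (⇑e.symm) (Equiv.refl (Fin n)) id
          rw [Equiv.coe_refl] at this
          have h' : Aq.submatrix id id = Aq := Matrix.submatrix_id_id Aq
          rw [h'] at this
          rw [this, hO1]
          ext i j; simp [Matrix.submatrix_apply]
        have hBqA' : Bq * A' = 0 := by
          rw [hA']
          have := Matrix.submatrix_mul_equiv Bq Ap id (Equiv.refl (Fin n)) (⇑e.symm)
          rw [Equiv.coe_refl] at this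
          have h' : Bq.submatrix id id = Bq := Matrix.submatrix_id_id Bq
          rw [h'] at this
          rw [this, hO2]
          ext i j; simp [Matrix.submatrix_apply]
        set A1 := A'.submatrix id Sum.inl with hA1
        set B1 := B'.submatrix Sum.inl id with hB1
        set A2 := A'.submatrix id Sum.inr with hA2
        set B2 := B'.submatrix Sum.inr id with hB2
        have prodBA : ∀ (f : Fin m ⊕ Fin t → Fin m ⊕ Fin t) (g : Fin m ⊕ Fin t → Fin m ⊕ Fin t),
            True := fun _ _ => trivial
        have hB1A1 : B1 * A1 = 1 := by
          rw [hB1, hA1]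
          have := Matrix.submatrix_mul_equiv B' A' (Sum.inl : Fin m → Fin m ⊕ Fin t)
            (Equiv.refl (Fin n)) (Sum.inl : Fin m → Fin m ⊕ Fin t)
          rw [Equiv.coe_refl] at this
          rw [this, hB'A', submatrix_one_inl_inl]
        have hB2A2 : B2 * A2 = 1 := by
          rw [hB2, hA2]
          have := Matrix.submatrix_mul_equiv B' A' (Sum.inr : Fin t → Fin m ⊕ Fin t)
            (Equiv.refl (Fin n)) (Sum.inr : Fin t → Fin m ⊕ Fin t)
          rw [Equiv.coe_refl] at this
          rw [this, hB'A', submatrix_one_inr_inr]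
        have hB1A2 : B1 * A2 = 0 := by
          rw [hB1, hA2]
          have := Matrix.submatrix_mul_equiv B' A' (Sum.inl : Fin m → Fin m ⊕ Fin t)
            (Equiv.refl (Fin n)) (Sum.inr : Fin t → Fin m ⊕ Fin t)
          rw [Equiv.coe_refl] at this
          rw [this, hB'A', submatrix_one_inl_inr]
        have hB2A1 : B2 * A1 = 0 := by
          rw [hB2, hA1]
          have := Matrix.submatrix_mul_equiv B' A' (Sum.inr : Fin t → Fin m ⊕ Fin t)
            (Equiv.refl (Fin n)) (Sum.inl : Fin m → Fin m ⊕ Fin t)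
          rw [Equiv.coe_refl] at this
          rw [this, hB'A', submatrix_one_inr_inl]
        have hB1Aq : B1 * Aq = 0 := by
          rw [hB1]
          have := Matrix.submatrix_mul_equiv B' Aq (Sum.inl : Fin m → Fin m ⊕ Fin t)
            (Equiv.refl (Fin n)) (id : Fin t → Fin t)
          rw [Equiv.coe_refl] at this
          have h' : Aq.submatrix id id = Aq := Matrix.submatrix_id_id Aq
          rw [h'] at this
          rw [this, hB'Aq]
          ext i j; simp [Matrix.submatrix_apply]
        have hB2Aq : B2 * Aq = 0 := by
          rw [hB2]
          have := Matrix.submatrix_mul_equiv B' Aq (Sum.inr : Fin t → Fin m ⊕ Fin t)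
            (Equiv.refl (Fin n)) (id : Fin t → Fin t)
          rw [Equiv.coe_refl] at this
          have h' : Aq.submatrix id id = Aq := Matrix.submatrix_id_id Aq
          rw [h'] at this
          rw [this, hB'Aq]
          ext i j; simp [Matrix.submatrix_apply]
        have hBqA1 : Bq * A1 = 0 := by
          rw [hA1]
          have := Matrix.submatrix_mul_equiv Bq A' (id : Fin t → Fin t)
            (Equiv.refl (Fin n)) (Sum.inl : Fin m → Fin m ⊕ Fin t)
          rw [Equiv.coe_refl] at this
          have h' : Bq.submatrix id id = Bq := Matrix.submatrix_id_id Bq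
          rw [h'] at this
          rw [this, hBqA']
          ext i j; simp [Matrix.submatrix_apply]
        have hBqA2 : Bq * A2 = 0 := by
          rw [hA2]
          have := Matrix.submatrix_mul_equiv Bq A' (id : Fin t → Fin t)
            (Equiv.refl (Fin n)) (Sum.inr : Fin t → Fin m ⊕ Fin t)
          rw [Equiv.coe_refl] at this
          have h' : Bq.submatrix id id = Bq := Matrix.submatrix_id_id Bq
          rw [h'] at this
          rw [this, hBqA']
          ext i j; simp [Matrix.submatrix_apply]
        have hp12 : p = A1 * B1 + A2 * B2 := by
          rw [← hA'B']
          ext i j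
          rw [Matrix.mul_apply, Fintype.sum_sum_type, Matrix.add_apply,
            Matrix.mul_apply, Matrix.mul_apply]
          rfl
        -- combined factorization of p2 + q
        set Aplus : Matrix (Fin n) (Fin t ⊕ Fin t) F := Matrix.fromCols A2 Aq with hAplus
        set Bplus : Matrix (Fin t ⊕ Fin t) (Fin n) F := Matrix.fromRows B2 Bq with hBplus
        have hAB_plus : Aplus * Bplus = A2 * B2 + q := by
          rw [hAplus, hBplus, Matrix.fromCols_mul_fromRows, hABq]
        have hBA_plus : Bplus * Aplus = 1 := by
          rw [hAplus, hBplus, Matrix.fromRows_mul_fromCols, hB2A2, hB2Aq, hBqA2, hBAq,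
            Matrix.fromBlocks_one]
        have hBplusA1 : Bplus * A1 = 0 := by
          rw [hBplus, Matrix.fromRows_mul, hB2A1, hBqA1]
          ext i j
          cases i <;> simp [Matrix.fromRows] <;> rfl
        have hB1Aplus : B1 * Aplus = 0 := by
          rw [hAplus, Matrix.mul_fromCols, hB1A2, hB1Aq]
          ext i j
          cases j <;> simp [Matrix.fromCols]
        -- reindex the combined factorization over Fin (t + t)
        set e2 : (Fin t ⊕ Fin t) ≃ Fin (t + t) := finSumFinEquiv with he2
        set Aplus' := Aplus.submatrix id ⇑e2.symm with hAplus'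
        set Bplus' := Bplus.submatrix ⇑e2.symm id with hBplus'
        have hAB_plus' : Aplus' * Bplus' = A2 * B2 + q := by
          rw [hAplus', hBplus', Matrix.submatrix_mul_equiv Aplus Bplus id e2.symm id,
            Matrix.submatrix_id_id, hAB_plus]
        have hBA_plus' : Bplus' * Aplus' = 1 := by
          rw [hAplus', hBplus']
          have := Matrix.submatrix_mul_equiv Bplus Aplus (⇑e2.symm) (Equiv.refl (Fin n))
            (⇑e2.symm)
          rw [Equiv.coe_refl] at this
          rw [this, hBA_plus, Matrix.submatrix_one_equiv]
        have hBplus'A1 : Bplus' * A1 = 0 := by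
          rw [hBplus']
          have := Matrix.submatrix_mul_equiv Bplus A1 (⇑e2.symm) (Equiv.refl (Fin n)) id
          rw [Equiv.coe_refl] at this
          have h' : A1.submatrix id id = A1 := Matrix.submatrix_id_id A1
          rw [h'] at this
          rw [this, hBplusA1]
          ext i j; simp [Matrix.submatrix_apply]
        have hB1Aplus' : B1 * Aplus' = 0 := by
          rw [hAplus']
          have := Matrix.submatrix_mul_equiv B1 Aplus id (Equiv.refl (Fin n)) (⇑e2.symm)
          rw [Equiv.coe_refl] at this
          have h' : B1.submatrix id id = B1 := Matrix.submatrix_id_id B1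
          rw [h'] at this
          rw [this, hB1Aplus]
          ext i j; simp [Matrix.submatrix_apply]
        -- recursive calls
        have hmN : m ≤ N := by omega
        have htm : t ≤ m := by omega
        have htN : t ≤ N := by omega
        have c1 : φ (A1 * B1 + A2 * B2) = φ (A1 * B1) + φ (A2 * B2) :=
          ih m t htm hmN (A1 * B1) (A2 * B2) A1 B1 A2 B2 rfl hB1A1 rfl hB2A2 hB1A2 hB2A1
        have c2 : φ (A2 * B2 + q) = φ (A2 * B2) + φ q :=
          ih t t le_rfl htN (A2 * B2) q A2 B2 Aq Bq rfl hB2A2 hABq hBAq hB2Aq hBqA2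
        have c3 : φ (A1 * B1 + (A2 * B2 + q)) = φ (A1 * B1) + φ (A2 * B2 + q) := by
          by_cases h3 : t + t ≤ m
          · exact ih m (t+t) h3 hmN (A1 * B1) (A2 * B2 + q) A1 B1 Aplus' Bplus'
              rfl hB1A1 hAB_plus' hBA_plus' hB1Aplus' hBplus'A1
          · push_neg at h3
            have httN : t + t ≤ N := by omega
            have := ih (t+t) m (le_of_lt h3) httN (A2 * B2 + q) (A1 * B1) Aplus' Bplus' A1 B1
              hAB_plus' hBA_plus' rfl hB1A1 hBplus'A1 hB1Aplus'
            rw [add_comm (A2 * B2 + q) (A1 * B1)] at this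
            rw [this, add_comm]
        calc φ (p + q) = φ (A1 * B1 + (A2 * B2 + q)) := by rw [hp12, add_assoc]
        _ = φ (A1 * B1) + φ (A2 * B2 + q) := c3
        _ = φ (A1 * B1) + (φ (A2 * B2) + φ q) := by rw [c2]
        _ = (φ (A1 * B1) + φ (A2 * B2)) + φ q := by rw [add_assoc]
        _ = φ (A1 * B1 + A2 * B2) + φ q := by rw [c1]
        _ = φ p + φ q := by rw [← hp12]


end StmtFourteen

theorem stmt_14 {F : Type*} [Field F] (h2 : (2 : F) ≠ 0) (n : ℕ)
    (φ : Matrix (Fin n) (Fin n) F → Matrix (Fin n) (Fin n) F)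
    (hφ : ∀ X Y : Matrix (Fin n) (Fin n) F,
      φ ((2 : F)⁻¹ • (X * Y + Y * X)) = (2 : F)⁻¹ • (φ X * φ Y + φ Y * φ X))
    (hnz : φ ≠ 0) (h0 : φ 0 = 0)
    (P Q : Matrix (Fin n) (Fin n) F) (hP : P * P = P) (hQ : Q * Q = Q)
    (hPQ : P * Q = 0) (hQP : Q * P = 0) :
    φ (P + Q) = φ P + φ Q := by
  obtain ⟨r, Ap, Bp, hABp, hBAp⟩ := rankFact P hP
  obtain ⟨t, Aq, Bq, hABq, hBAq⟩ := rankFact Q hQ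
  have hBpAq : Bp * Aq = 0 := by
    have e1 : Q * Aq = Aq := by rw [← hABq, Matrix.mul_assoc, hBAq, Matrix.mul_one]
    have key : Bp * (P * (Q * Aq)) = Bp * Aq := by
      rw [e1, ← hABp, Matrix.mul_assoc Ap Bp Aq, ← Matrix.mul_assoc Bp Ap (Bp * Aq),
        hBAp, Matrix.one_mul]
    have key0 : Bp * (P * (Q * Aq)) = 0 := by
      rw [← Matrix.mul_assoc P Q Aq, hPQ, Matrix.zero_mul, Matrix.mul_zero]
    rw [← key, key0]
  have hBqAp : Bq * Ap = 0 := by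
    have e1 : P * Ap = Ap := by rw [← hABp, Matrix.mul_assoc, hBAp, Matrix.mul_one]
    have key : Bq * (Q * (P * Ap)) = Bq * Ap := by
      rw [e1, ← hABq, Matrix.mul_assoc Aq Bq Ap, ← Matrix.mul_assoc Bq Aq (Bq * Ap),
        hBAq, Matrix.one_mul]
    have key0 : Bq * (Q * (P * Ap)) = 0 := by
      rw [← Matrix.mul_assoc Q P Ap, hQP, Matrix.zero_mul, Matrix.mul_zero]
    rw [← key, key0]
  rcases le_total t r with h | h
  · exact main h2 φ hφ h0 r r t h le_rfl P Q Ap Bp Aq Bq hABp hBAp hABq hBAq hBpAq hBqAp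
  · have hsym := main h2 φ hφ h0 t t r h le_rfl Q P Aq Bq Ap Bp hABq hBAq hABp hBAp
      hBqAp hBpAq
    rw [add_comm Q P] at hsym
    rw [hsym, add_comm]
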